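/- The function x(t) = √(c²(t−t₀)² + 4L²) satisfies the constraint equation (1/2)ẋ² + 2c²L²/x² − c²/2 = 0 (the two-universe MIU constraint with ρ = 0 and curvature k = −1), and x(t) ≥ 2L > 0 for all t. -/

import Mathlib

open Real

theorem two_universe_pure_quantum_solution
    (c L t₀ : ℝ) (hc : 0 < c) (hL : 0 < L)
    (x : ℝ → ℝ)
    (hx : ∀ t, x t = Real.sqrt (c ^ 2 * (t - t₀) ^ 2 + 4 * L ^ 2)) :
    ∀ t, ((1/2) * (deriv x t) ^ 2 + 2 * c ^ 2 * L ^ 2 / (x t) ^ 2 - c ^ 2 / 2 = 0) ∧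
      2 * L ≤ x t := by
  intro t
  set u : ℝ → ℝ := fun s => c ^ 2 * (s - t₀) ^ 2 + 4 * L ^ 2 with hu
  have hupos : ∀ s, 0 < u s := by
    intro s
    show 0 < c ^ 2 * (s - t₀) ^ 2 + 4 * L ^ 2
    positivity
  have hxeq : x = fun s => Real.sqrt (u s) := by
    funext s; exact hx s
  have hud : HasDerivAt u (2 * c ^ 2 * (t - t₀)) t := by
    have h1 : HasDerivAt (fun s => s - t₀) 1 t := (hasDerivAt_id t).sub_const t₀
    have h2 : HasDerivAt (fun s => (s - t₀) ^ 2) (2 * (t - t₀)) t := by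
      simpa using h1.fun_pow 2
    have h3 := (h2.const_mul (c ^ 2)).add_const (4 * L ^ 2)
    simpa [hu, mul_comm, mul_left_comm, mul_assoc] using h3
  have hsq : u t ≠ 0 := ne_of_gt (hupos t)
  have hxd : HasDerivAt x (2 * c ^ 2 * (t - t₀) / (2 * Real.sqrt (u t))) t := by
    rw [hxeq]; exact hud.sqrt hsq
  have hderiv : deriv x t = c ^ 2 * (t - t₀) / Real.sqrt (u t) := by
    rw [hxd.deriv]; field_simp
  have hsqsq : Real.sqrt (u t) ^ 2 = u t := Real.sq_sqrt (hupos t).le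
  constructor
  · rw [hderiv, hx t]
    show (1/2) * (c ^ 2 * (t - t₀) / Real.sqrt (u t)) ^ 2 +
      2 * c ^ 2 * L ^ 2 / Real.sqrt (u t) ^ 2 - c ^ 2 / 2 = 0
    rw [div_pow, hsqsq]
    have hune : u t ≠ 0 := ne_of_gt (hupos t)
    field_simp
    ring
  · rw [hx t]
    have h1 : (2 * L) ^ 2 ≤ c ^ 2 * (t - t₀) ^ 2 + 4 * L ^ 2 := by nlinarith [sq_nonneg (c * (t - t₀))]
    calc 2 * L = Real.sqrt ((2 * L) ^ 2) := by
          rw [Real.sqrt_sq (by positivity)]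
      _ ≤ _ := Real.sqrt_le_sqrt h1
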